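/- There exist two positive solutions (x, x̃) and (x', x̃') of the equilateral pentagonal Siamese system such that (x' − x)/x > 5.9. (Thus the relative variation δ_e in the heights among the three isomeric equilateral pentagonal Siamese dipyramids exceeds 5.9.) -/

import Mathlib

/-- `(x, x̃) = p` is a positive solution of the equilateral pentagonal Siamese
system. -/
def EqPentSol (p : ℝ × ℝ) : Prop :=
  0 < p.1 ∧ p.1 < Real.sqrt 3 / 2 ∧ 0 < p.2 ∧ p.2 < Real.sqrt 3 / 2 ∧
  p.2 = (5 * p.1 ^ 4 - 5 * p.1 ^ 2 + 1) / (2 * (1 - p.1 ^ 2) ^ 2) ∧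
  p.1 = (5 * p.2 ^ 4 - 5 * p.2 ^ 2 + 1) / (2 * (1 - p.2 ^ 2) ^ 2)

private lemma exists_root :
    ∃ x : ℝ, 0.0711 ≤ x ∧ x ≤ 0.0712 ∧
      2*x*((2*(1-x^2)^2)^2 - (5*x^4-5*x^2+1)^2)^2
        - (5*(5*x^4-5*x^2+1)^4 - 5*(5*x^4-5*x^2+1)^2*(2*(1-x^2)^2)^2
            + (2*(1-x^2)^2)^4) = 0 := by
  set g : ℝ → ℝ := fun x =>
    2*x*((2*(1-x^2)^2)^2 - (5*x^4-5*x^2+1)^2)^2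
      - (5*(5*x^4-5*x^2+1)^4 - 5*(5*x^4-5*x^2+1)^2*(2*(1-x^2)^2)^2
          + (2*(1-x^2)^2)^4) with hg
  have hcont : ContinuousOn g (Set.Icc (0.0711:ℝ) 0.0712) := by
    apply Continuous.continuousOn; fun_prop
  have h1 : g 0.0711 ≤ 0 := by norm_num [hg]
  have h2 : (0:ℝ) ≤ g 0.0712 := by norm_num [hg]
  have := intermediate_value_Icc (by norm_num : (0.0711:ℝ) ≤ 0.0712) hcont
  have hmem : (0:ℝ) ∈ Set.Icc (g 0.0711) (g 0.0712) := ⟨h1, h2⟩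
  obtain ⟨x, hx, hgx⟩ := this hmem
  exact ⟨x, hx.1, hx.2, hgx⟩

/-- The relative variation in the heights among the isomeric equilateral
pentagonal Siamese dipyramids exceeds 5.9. -/
theorem eq_pent_siamese_height_variation :
    ∃ p q : ℝ × ℝ, EqPentSol p ∧ EqPentSol q ∧ (q.1 - p.1) / p.1 > 5.9 := by
  obtain ⟨x, ha, hb, hg⟩ := exists_root
  have hx0 : 0 < x := by linarith
  obtain ⟨N, D, hgND, hDpos, hNpos, hlt, hhalf, hrat, hfxeq⟩ :
      ∃ N D : ℝ, 2*x*(D^2 - N^2)^2 = 5*N^4 - 5*N^2*D^2 + D^4 ∧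
        0 < D ∧ 0 < N ∧ N < D ∧ 2*N ≤ D ∧ 6.9*(x*D) < N ∧
        N / D = (5*x^4 - 5*x^2 + 1) / (2*(1 - x^2)^2) := by
    have hx2 : x^2 ≤ (0.0712:ℝ)^2 := by nlinarith
    refine ⟨5*x^4 - 5*x^2 + 1, 2*(1 - x^2)^2, by linarith [hg], by nlinarith,
      by nlinarith, by nlinarith [hx2, sq_nonneg x, sq_nonneg (x^2)],
      by nlinarith [hx2, sq_nonneg x], ?_, rfl⟩
    nlinarith [sq_nonneg (x - 0.0711), sq_nonneg (x - 0.0712), sq_nonneg x,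
      mul_nonneg (sub_nonneg.2 ha) (sub_nonneg.2 hb), hx2]
  clear hg
  set y : ℝ := N / D with hy
  have hy0 : 0 < y := div_pos hNpos hDpos
  have hyle : y ≤ 1/2 := by rw [hy, div_le_iff₀ hDpos]; linarith
  have hs3 : (1:ℝ) < Real.sqrt 3 := by
    have h := Real.sq_sqrt (by norm_num : (0:ℝ) ≤ 3)
    nlinarith [Real.sqrt_nonneg 3]
  have hxlt : x < Real.sqrt 3 / 2 := by linarith
  have hylt : y < Real.sqrt 3 / 2 := by linarith
  have hDne : D ≠ 0 := ne_of_gt hDpos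
  have h1y : 1 - y^2 = (D^2 - N^2) / D^2 := by
    rw [hy]; field_simp
  have hDN2 : 0 < D^2 - N^2 := by nlinarith
  have h1ypos : 0 < 1 - y^2 := by rw [h1y]; positivity
  have hkey : x = (5*y^4 - 5*y^2 + 1) / (2*(1 - y^2)^2) := by
    rw [eq_div_iff (by positivity), hy]
    field_simp
    linear_combination hgND
  have hfx : y = (5*x^4 - 5*x^2 + 1) / (2*(1 - x^2)^2) := hfxeq
  have hratio : 6.9 * x < y := by
    rw [hy, lt_div_iff₀ hDpos]; nlinarith [hrat]
  refine ⟨(x, y), (y, x), ⟨hx0, hxlt, hy0, hylt, hfx, hkey⟩,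
    ⟨hy0, hylt, hx0, hxlt, hkey, hfx⟩, ?_⟩
  rw [gt_iff_lt, lt_div_iff₀ hx0]
  show 5.9 * x < y - x
  linarith
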